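/- Let 0 < r₀ < r₁ and let (A, w) be an EYM solution on (r₀, r₁). Suppose A(r) converges as r → r₀⁺ to a finite strictly positive limit and w(r) converges as r → r₀⁺ to a finite limit. Then lim sup_{r → r₀⁺} w'(r)² < +∞. -/

import Mathlib

open Filter Topology Set

/-- The quantity Φ(r) = 1 − A(r) − (1 − w(r)²)²/r² − Λ·r². -/
noncomputable def Phi (Λ : ℝ) (A w : ℝ → ℝ) (r : ℝ) : ℝ :=
  1 - A r - (1 - (w r) ^ 2) ^ 2 / r ^ 2 - Λ * r ^ 2

/-- `(A, w)` is a static spherically symmetric Einstein SU(2)-Yang–Mills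
solution with cosmological constant `Λ` on the set `I`. -/
def IsEYM (Λ : ℝ) (A w : ℝ → ℝ) (I : Set ℝ) : Prop :=
  (∀ r ∈ I, DifferentiableAt ℝ A r) ∧
  (∀ r ∈ I, DifferentiableAt ℝ w r) ∧
  (∀ r ∈ I, DifferentiableAt ℝ (deriv w) r) ∧
  (∀ r ∈ I, r * deriv A r + 2 * A r * (deriv w r) ^ 2 = Phi Λ A w r) ∧
  (∀ r ∈ I, r ^ 2 * A r * deriv (deriv w) r + r * Phi Λ A w r * deriv w r
      + w r * (1 - (w r) ^ 2) = 0)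

set_option maxHeartbeats 1000000 in
/-- if `A` tends to a finite strictly positive limit and `w` tends
to a finite limit as `r → r₀⁺`, then `limsup_{r→r₀⁺} w'(r)² < +∞`. -/
theorem stmt_6 (Λ r₀ r₁ : ℝ) (A w : ℝ → ℝ)
    (hr₀ : 0 < r₀) (hr₁ : r₀ < r₁)
    (hEYM : IsEYM Λ A w (Ioo r₀ r₁))
    (L : ℝ) (hL : 0 < L) (hA : Filter.Tendsto A (𝓝[>] r₀) (𝓝 L))
    (w₀ : ℝ) (hw : Filter.Tendsto w (𝓝[>] r₀) (𝓝 w₀)) :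
    Filter.limsup (fun r => (((deriv w r) ^ 2 : ℝ) : EReal)) (𝓝[>] r₀) < ⊤ := by
  obtain ⟨hAdiff, hwdiff, hw'diff, heq1, heq2⟩ := hEYM
  set W : ℝ := |w₀| + 1 with hWdef
  have hW : 0 < W := by positivity
  -- eventually good bounds
  have hev : ∀ᶠ r in 𝓝[>] r₀,
      r ∈ Ioo r₀ r₁ ∧ L / 2 < A r ∧ A r < L + 1 ∧ |w r| < W := by
    have h1 : ∀ᶠ r in 𝓝[>] r₀, r ∈ Ioo r₀ r₁ :=
      Ioo_mem_nhdsGT hr₁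
    have h2 := hA.eventually (eventually_gt_nhds (by linarith : L / 2 < L))
    have h3 := hA.eventually (eventually_lt_nhds (by linarith : L < L + 1))
    have h4 : ∀ᶠ r in 𝓝[>] r₀, |w r| < W :=
      ((continuous_abs.tendsto w₀).comp hw).eventually
        (eventually_lt_nhds (by simp [hWdef]))
    filter_upwards [h1, h2, h3, h4] with r a b c d using ⟨a, b, c, d⟩
  obtain ⟨ρ, hρ, hsub⟩ := mem_nhdsGT_iff_exists_Ioo_subset.mp hev
  rw [mem_Ioi] at hρ
  -- constants
  set M : ℝ := 1 + (L + 1) + (1 + W ^ 2) ^ 2 / r₀ ^ 2 + |Λ| * r₁ ^ 2 with hMdef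
  have hM : 0 < M := by positivity
  set B : ℝ := r₀ ^ 2 * (L / 2) with hBdef
  have hB : 0 < B := by positivity
  set K : ℝ := (2 * r₁ * M + 2 * W * (1 + W ^ 2)) / B + 1 with hKdef
  have hr₁pos : 0 < r₁ := lt_trans hr₀ hr₁
  have hK : 0 < K := by positivity
  -- bound on Phi
  have hPhi : ∀ r ∈ Ioo r₀ ρ, |Phi Λ A w r| ≤ M := by
    intro r hr
    obtain ⟨⟨hrl, hrr⟩, hA1, hA2, hw1⟩ := hsub hr
    have hrpos : 0 < r := lt_trans hr₀ hrl
    have hq1 : (1 - (w r) ^ 2) ^ 2 / r ^ 2 ≤ (1 + W ^ 2) ^ 2 / r₀ ^ 2 := by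
      apply div_le_div₀ (by positivity) ?_ (by positivity) (by nlinarith)
      have : |w r| ^ 2 ≤ W ^ 2 := by nlinarith [abs_nonneg (w r)]
      rw [sq_abs] at this
      nlinarith [sq_nonneg (w r)]
    have hq0 : 0 ≤ (1 - (w r) ^ 2) ^ 2 / r ^ 2 := by positivity
    have hrsq : r ^ 2 ≤ r₁ ^ 2 := by nlinarith
    have hΛ : Λ * r ^ 2 ≤ |Λ| * r₁ ^ 2 ∧ -( |Λ| * r₁ ^ 2) ≤ Λ * r ^ 2 := by
      constructor
      · calc Λ * r ^ 2 ≤ |Λ| * r ^ 2 :=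
              mul_le_mul_of_nonneg_right (le_abs_self Λ) (sq_nonneg r)
          _ ≤ |Λ| * r₁ ^ 2 := mul_le_mul_of_nonneg_left hrsq (abs_nonneg Λ)
      · calc -( |Λ| * r₁ ^ 2) = -|Λ| * r₁ ^ 2 := by ring
          _ ≤ -|Λ| * r ^ 2 := by
              apply mul_le_mul_of_nonpos_left hrsq
              simp [abs_nonneg Λ]
          _ ≤ Λ * r ^ 2 := mul_le_mul_of_nonneg_right (neg_abs_le Λ) (sq_nonneg r)
    have hdiv : (0:ℝ) ≤ (1 + W ^ 2) ^ 2 / r₀ ^ 2 := by positivity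
    rw [abs_le, Phi]
    constructor
    · linarith [hΛ.2, hMdef]
    · linarith [hΛ.1, hMdef]
  -- derivative of v := (deriv w)^2 and its bound
  have hderiv : ∀ r ∈ Ioo r₀ ρ, HasDerivAt (fun s => (deriv w s) ^ 2)
      (2 * deriv w r * deriv (deriv w) r) r := by
    intro r hr
    have h := ((hw'diff r (hsub hr).1).hasDerivAt).pow 2
    have h2 : HasDerivAt (deriv w ^ 2) (2 * deriv w r * deriv (deriv w) r) r := by
      simpa [mul_comm, mul_assoc, mul_left_comm] using h
    exact h2
  have hbound : ∀ r ∈ Ioo r₀ ρ,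
      |2 * deriv w r * deriv (deriv w) r| ≤ K * (deriv w r) ^ 2 + K := by
    intro r hr
    obtain ⟨⟨hrl, hrr⟩, hA1, hA2, hw1⟩ := hsub hr
    have hrI : r ∈ Ioo r₀ r₁ := (hsub hr).1
    have hrpos : 0 < r := lt_trans hr₀ hrl
    have hApos : 0 < A r := by linarith
    have hD : (0:ℝ) < r ^ 2 * A r := by positivity
    have hw'' : deriv (deriv w) r
        = -(r * Phi Λ A w r * deriv w r + w r * (1 - (w r) ^ 2)) / (r ^ 2 * A r) := by
      rw [eq_div_iff hD.ne']
      linear_combination heq2 r hrI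
    have hBD : B ≤ r ^ 2 * A r := by
      rw [hBdef]
      exact mul_le_mul (pow_le_pow_left₀ hr₀.le hrl.le 2) hA1.le (half_pos hL).le (sq_nonneg r)
    have habs1 : |r * Phi Λ A w r * deriv w r| ≤ r₁ * M * |deriv w r| := by
      rw [abs_mul, abs_mul]
      apply mul_le_mul_of_nonneg_right _ (abs_nonneg _)
      have h1 : |r| ≤ r₁ := by rw [abs_of_pos hrpos]; linarith
      exact mul_le_mul h1 (hPhi r hr) (abs_nonneg _) (by linarith)
    have hsqw : (w r) ^ 2 ≤ W ^ 2 := by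
      nlinarith [abs_nonneg (w r), sq_abs (w r)]
    have habs2 : |w r * (1 - (w r) ^ 2)| ≤ W * (1 + W ^ 2) := by
      rw [abs_mul]
      have h1 : |1 - (w r) ^ 2| ≤ 1 + W ^ 2 := by
        rw [abs_le]; constructor <;> nlinarith [sq_nonneg (w r)]
      exact mul_le_mul hw1.le h1 (abs_nonneg _) hW.le
    have hnum : |r * Phi Λ A w r * deriv w r + w r * (1 - (w r) ^ 2)|
        ≤ r₁ * M * |deriv w r| + W * (1 + W ^ 2) :=
      (abs_add_le _ _).trans (add_le_add habs1 habs2)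
    have habs'' : B * |deriv (deriv w) r| ≤ r₁ * M * |deriv w r| + W * (1 + W ^ 2) := by
      have h0 : |deriv (deriv w) r|
          = |r * Phi Λ A w r * deriv w r + w r * (1 - (w r) ^ 2)| / (r ^ 2 * A r) := by
        rw [hw'', abs_div, abs_neg, abs_of_pos hD]
      rw [h0]
      refine le_trans ?_ hnum
      calc B * (|r * Phi Λ A w r * deriv w r + w r * (1 - (w r) ^ 2)| / (r ^ 2 * A r))
          ≤ (r ^ 2 * A r) * (|r * Phi Λ A w r * deriv w r + w r * (1 - (w r) ^ 2)| / (r ^ 2 * A r)) :=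
            mul_le_mul_of_nonneg_right hBD (by positivity)
        _ = _ := by field_simp
    have h1v : |deriv w r| ≤ 1 + (deriv w r) ^ 2 := by
      nlinarith [abs_nonneg (deriv w r), sq_abs (deriv w r), sq_nonneg (|deriv w r| - 1)]
    have hKB : K * B = 2 * r₁ * M + 2 * W * (1 + W ^ 2) + B := by
      rw [hKdef]; field_simp
    rw [abs_mul, abs_mul, abs_two]
    have hc : (0:ℝ) ≤ W * (1 + W ^ 2) := by positivity
    have hr₁M : (0:ℝ) ≤ r₁ * M := by positivity
    have key : B * (2 * |deriv w r| * |deriv (deriv w) r|)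
        ≤ B * (K * (deriv w r) ^ 2 + K) := by
      nlinarith [mul_le_mul_of_nonneg_left habs'' (abs_nonneg (deriv w r)),
        mul_le_mul_of_nonneg_left h1v hc, sq_abs (deriv w r),
        abs_nonneg (deriv w r), abs_nonneg (deriv (deriv w) r), sq_nonneg (deriv w r)]
    exact le_of_mul_le_mul_left key hB
  -- midpoint
  set ρ' : ℝ := (r₀ + ρ) / 2 with hρ'def
  have hρ'mem : ρ' ∈ Ioo r₀ ρ := ⟨by simp [hρ'def]; linarith, by simp [hρ'def]; linarith⟩
  set δ : ℝ := (deriv w ρ') ^ 2 with hδdef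
  have hδ : 0 ≤ δ := sq_nonneg _
  set C : ℝ := gronwallBound δ K K (ρ' - r₀) with hCdef
  -- main pointwise bound
  have hmain : ∀ r ∈ Ioo r₀ ρ', (deriv w r) ^ 2 ≤ C := by
    intro r hr
    obtain ⟨hrl, hrr⟩ := hr
    set g : ℝ → ℝ := fun t => (deriv w (ρ' - t)) ^ 2 with hgdef
    set g' : ℝ → ℝ := fun t => -(2 * deriv w (ρ' - t) * deriv (deriv w) (ρ' - t)) with hg'def
    have hmem : ∀ t ∈ Icc (0:ℝ) (ρ' - r), ρ' - t ∈ Ioo r₀ ρ := by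
      intro t ht
      constructor
      · have := ht.2; linarith
      · have := ht.1; linarith [hρ'mem.2]
    have hgd : ∀ t ∈ Icc (0:ℝ) (ρ' - r), HasDerivAt g (g' t) t := by
      intro t ht
      have h1 : HasDerivAt (fun t : ℝ => ρ' - t) (-1) t := by
        simpa using (hasDerivAt_id t).const_sub ρ'
      have h2 := (hderiv _ (hmem t ht)).comp t h1
      simpa [hgdef, hg'def, Function.comp_def] using h2
    have hcont : ContinuousOn g (Icc 0 (ρ' - r)) :=
      fun t ht => (hgd t ht).continuousAt.continuousWithinAt
    have hga : |g 0| ≤ δ := by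
      have h0 : g 0 = δ := by simp [hgdef, hδdef]
      rw [h0, abs_of_nonneg hδ]
    have hbd : ∀ t ∈ Ico (0:ℝ) (ρ' - r), ‖g' t‖ ≤ K * ‖g t‖ + K := by
      intro t ht
      have ht' : t ∈ Icc (0:ℝ) (ρ' - r) := ⟨ht.1, le_of_lt ht.2⟩
      have := hbound _ (hmem t ht')
      simp only [hgdef, hg'def, Real.norm_eq_abs, abs_neg]
      have h0 : |(deriv w (ρ' - t)) ^ 2| = (deriv w (ρ' - t)) ^ 2 :=
        abs_of_nonneg (sq_nonneg _)
      rw [h0]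
      exact this
    have := norm_le_gronwallBound_of_norm_deriv_right_le hcont
      (fun t ht => (hgd t ⟨ht.1, le_of_lt ht.2⟩).hasDerivWithinAt)
      (by simpa [Real.norm_eq_abs] using hga) hbd (ρ' - r)
      ⟨by linarith, le_refl _⟩
    have hgr : g (ρ' - r) = (deriv w r) ^ 2 := by simp [hgdef]
    rw [Real.norm_eq_abs, hgr, abs_of_nonneg (sq_nonneg _)] at this
    calc (deriv w r) ^ 2 ≤ gronwallBound δ K K (ρ' - r - 0) := this
      _ ≤ C := by
          rw [hCdef, sub_zero, gronwallBound_of_K_ne_0 (ne_of_gt hK)]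
          simp only [div_self (ne_of_gt hK)]
          have he : Real.exp (K * (ρ' - r)) ≤ Real.exp (K * (ρ' - r₀)) := by
            apply Real.exp_le_exp.mpr
            apply mul_le_mul_of_nonneg_left (by linarith) (le_of_lt hK)
          nlinarith [Real.exp_pos (K * (ρ' - r))]
  -- conclude
  have hev2 : ∀ᶠ r in 𝓝[>] r₀,
      (((deriv w r) ^ 2 : ℝ) : EReal) ≤ (C : EReal) := by
    filter_upwards [Ioo_mem_nhdsGT hρ'mem.1] with r hr
    exact EReal.coe_le_coe_iff.mpr (hmain r hr)
  exact lt_of_le_of_lt (Filter.limsup_le_of_le (by isBoundedDefault) hev2)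
    (EReal.coe_lt_top C)
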